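/- Let e be a positive integer and h(x) := x·log x − x + 1. There is a unique η_* ∈ (0,1) satisfying h(η_*^{1/η_*}) = h(η_*^{1/e}) + η_*^{1/e}·log(η_*^{1/e})·(log(η_*^{1/η_*}) − log(η_*^{1/e})); moreover, for this η_*, the inequality h(x) ≥ h(r) + r·log(r)·(log x − log r) holds for all (x, r) ∈ [η_*^{1/η_*}, 1] × [η_*^{1/e}, 1]. -/

import Mathlib

open scoped BigOperators

attribute [local instance] Classical.propDecidable

noncomputable section

namespace LowerTails

/-- The edge set of the complete graph `K_n`: unordered pairs of distinct elements of `Fin n`. -/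
abbrev Edge (n : ℕ) := {e : Sym2 (Fin n) // ¬ e.IsDiag}

/-- A graph on `[n]`, identified with its edge-indicator vector in `{0,1}^{E(K_n)}`. -/
abbrev EGraph (n : ℕ) := Edge n → Bool

/-- The probability of the configuration `G` under the product measure where edge `e`
is present independently with probability `q e`. -/
def wt {n : ℕ} (q : Edge n → ℝ) (G : EGraph n) : ℝ :=
  ∏ e : Edge n, if G e then q e else 1 - q e

/-- Probability of the event `S` under `G(n, q)`. -/
def pr {n : ℕ} (q : Edge n → ℝ) (S : Set (EGraph n)) : ℝ :=
  ∑ G : EGraph n, if G ∈ S then wt q G else 0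

/-- Conditional probability of `S` given `L` under `G(n, q)`. -/
def cpr {n : ℕ} (q : Edge n → ℝ) (L S : Set (EGraph n)) : ℝ :=
  pr q (S ∩ L) / pr q L

/-- Conditional expectation of `f` given the event `L` under `G(n, q)`. -/
def cex {n : ℕ} (q : Edge n → ℝ) (L : Set (EGraph n)) (f : EGraph n → ℝ) : ℝ :=
  (∑ G : EGraph n, if G ∈ L then wt q G * f G else 0) / pr q L

/-- The simple graph on `Fin n` associated to an edge-indicator vector. -/
def toSG {n : ℕ} (G : EGraph n) : SimpleGraph (Fin n) :=
  SimpleGraph.fromEdgeSet {e : Sym2 (Fin n) | ∃ h : ¬e.IsDiag, G ⟨e, h⟩ = true}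

/-- The number of copies of `H` in `G`, i.e. the number of subgraphs of `G` isomorphic to `H`. -/
def countCopies {k n : ℕ} (H : SimpleGraph (Fin k)) (G : SimpleGraph (Fin n)) : ℕ :=
  Set.ncard {K : G.Subgraph | Nonempty (H ≃g K.coe)}

/-- `N_H(G)` for an edge-indicator vector `G`, as a real number. -/
def NH {k n : ℕ} (H : SimpleGraph (Fin k)) (G : EGraph n) : ℝ :=
  countCopies H (toSG G)

/-- `E[N_H(q)]`, the expected number of copies of `H` in `G(n, q)`. -/
def expNH {k : ℕ} (H : SimpleGraph (Fin k)) {n : ℕ} (q : Edge n → ℝ) : ℝ :=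
  ∑ G : EGraph n, wt q G * NH H G

/-- `N_H(K_n)`, the number of copies of `H` in the complete graph `K_n`. -/
def NHKn {k : ℕ} (H : SimpleGraph (Fin k)) (n : ℕ) : ℝ :=
  countCopies H (⊤ : SimpleGraph (Fin n))

/-- The lower tail event `L_p(H, η) = {G : N_H(G) ≤ η E[N_H(p)]}`. -/
def lowerTail {k : ℕ} (H : SimpleGraph (Fin k)) (n : ℕ) (p η : ℝ) : Set (EGraph n) :=
  {G | NH H G ≤ η * expNH H (fun _ : Edge n => p)}

/-- `h(x) = x log x - x + 1` (with `h(0) = 1` since `Real.log 0 = 0`). -/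
def hfun (x : ℝ) : ℝ := x * Real.log x - x + 1

/-- The relative entropy `i_p(t)` of `Ber(t)` with respect to `Ber(p)`. -/
def ip (p t : ℝ) : ℝ := t * Real.log (t / p) + (1 - t) * Real.log ((1 - t) / (1 - p))

/-- The number of edges of `H` as a real number. -/
def eH {k : ℕ} (H : SimpleGraph (Fin k)) : ℝ := H.edgeSet.ncard

/-- The defining equation of the threshold `η_H`, for a graph with `e` edges. -/
def etaEq (e η : ℝ) : Prop :=
  hfun (η ^ (1 / η)) =
    hfun (η ^ (1 / e)) + η ^ (1 / e) * Real.log (η ^ (1 / e)) *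
      (Real.log (η ^ (1 / η)) - Real.log (η ^ (1 / e)))

/-- The 2-density `m_2(H)`. -/
def m2 {k : ℕ} (H : SimpleGraph (Fin k)) : ℝ :=
  sSup {x : ℝ | ∃ F : H.Subgraph, 2 ≤ F.edgeSet.ncard ∧
    x = ((F.edgeSet.ncard : ℝ) - 1) / ((F.verts.ncard : ℝ) - 2)}

/-- The variational problem `Φ_p(H, η)`. -/
def PhiP {k : ℕ} (H : SimpleGraph (Fin k)) (n : ℕ) (p η : ℝ) : ℝ :=
  sInf {x : ℝ | ∃ q : Edge n → ℝ, (∀ e, q e ∈ Set.Icc (0:ℝ) 1) ∧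
    expNH H q ≤ η * expNH H (fun _ : Edge n => p) ∧ x = ∑ e : Edge n, ip p (q e)}

/-- The sparse limit variational problem `Φ(H, η)`. -/
def Phi {k : ℕ} (H : SimpleGraph (Fin k)) (n : ℕ) (η : ℝ) : ℝ :=
  sInf {x : ℝ | ∃ q : Edge n → ℝ, (∀ e, q e ∈ Set.Icc (0:ℝ) 1) ∧
    expNH H q ≤ η * NHKn H n ∧ x = ∑ e : Edge n, hfun (q e)}

/-- The cut norm of an `n × n` real matrix. -/
def cutNorm {n : ℕ} (M : Matrix (Fin n) (Fin n) ℝ) : ℝ :=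
  sSup {x : ℝ | ∃ a b : Fin n → ℝ, (∀ i, a i ∈ Set.Icc (0:ℝ) 1) ∧ (∀ i, b i ∈ Set.Icc (0:ℝ) 1) ∧
    x = |∑ i : Fin n, ∑ j : Fin n, a i * M i j * b j| / (n : ℝ) ^ 2}

/-- The symmetric matrix with entries `q_{ij} - c` off the diagonal, `0` on the diagonal. -/
def devMat {n : ℕ} (q : Edge n → ℝ) (c : ℝ) : Matrix (Fin n) (Fin n) ℝ :=
  fun i j => if h : i = j then 0 else q ⟨s(i, j), by simp [Sym2.mk_isDiag_iff, h]⟩ - c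

/-- The edge-indicator vector of `G` as a real vector. -/
def ind {n : ℕ} (G : EGraph n) : Edge n → ℝ := fun e => if G e then 1 else 0

/-- `Y_A = ∏_{e ∈ A} Y_e`. -/
def YA {n : ℕ} (A : Finset (Edge n)) (G : EGraph n) : ℝ :=
  ∏ e ∈ A, (if G e then (1:ℝ) else 0)

/-- The event that a configuration agrees with `G0` on the set `W`. -/
def agreeOn {n : ℕ} (W : Finset (Edge n)) (G0 : EGraph n) : Set (EGraph n) :=
  {G | ∀ w ∈ W, G w = G0 w}

/-- The conditional expectation `E[f | (Y_w)_{w ∈ W}]` under the pmf `μ`, evaluated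
at the outcome `G0` (i.e. given that `Y` agrees with `G0` on `W`). -/
def condExpW {n : ℕ} (μ : EGraph n → ℝ) (W : Finset (Edge n)) (f : EGraph n → ℝ)
    (G0 : EGraph n) : ℝ :=
  (∑ G : EGraph n, if G ∈ agreeOn W G0 then μ G * f G else 0) /
    (∑ G : EGraph n, if G ∈ agreeOn W G0 then μ G else 0)

/-- The pmf of `G(n, p)` conditioned on the lower tail event `L_p(H, η)`. -/
def ltPMF {k : ℕ} (H : SimpleGraph (Fin k)) (n : ℕ) (p η : ℝ) : EGraph n → ℝ :=
  fun G => (if G ∈ lowerTail H n p η then wt (fun _ : Edge n => p) G else 0) /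
    pr (fun _ : Edge n => p) (lowerTail H n p η)

/-- The hyperedges of the hypergraph `H(H)`: edge sets of copies of `H` in `K_n`. -/
def copySets {k : ℕ} (H : SimpleGraph (Fin k)) (n : ℕ) : Finset (Finset (Edge n)) :=
  Finset.univ.filter (fun A => ∃ f : Fin k ↪ Fin n,
    ∀ e : Edge n, e ∈ A ↔ ∃ u v : Fin k, H.Adj u v ∧ (e : Sym2 (Fin n)) = s(f u, f v))

/-- The correlation `D_W(B, b)` as a random variable (a function of the outcome `G0`). -/
def DW {n : ℕ} (μ : EGraph n → ℝ) (W : Finset (Edge n)) (B : Finset (Edge n)) (b : Edge n)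
    (G0 : EGraph n) : ℝ :=
  condExpW μ W (YA B) G0 - condExpW μ W (YA (B.erase b)) G0 * condExpW μ W (YA {b}) G0

/-- The energy `E_H(W)` of a set `W` with respect to the pmf `μ`. -/
def energy {k n : ℕ} (H : SimpleGraph (Fin k)) (μ : EGraph n → ℝ) (p : ℝ)
    (W : Finset (Edge n)) : ℝ :=
  ∑ G0 : EGraph n, μ G0 *
    ∑ A ∈ (copySets H n).filter (fun A => Disjoint A W),
      ∑ B ∈ A.powerset.filter (fun B => 2 ≤ B.card),
        ∑ b ∈ B, (DW μ W B b G0) ^ 2 /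
          ((Nat.choose H.edgeSet.ncard B.card : ℝ) * (B.card : ℝ) * p ^ (2 * B.card))

end LowerTails

namespace LowerTails

/-! ### auxiliary analysis -/

def phiF (t : ℝ) : ℝ := Real.exp t * t - Real.exp t + 1
def DF (t : ℝ) : ℝ := Real.exp t * t

lemma hasDerivAt_phiF (t : ℝ) : HasDerivAt phiF (DF t) t := by
  have h1 : HasDerivAt (fun t : ℝ => Real.exp t * t) (Real.exp t * t + Real.exp t * 1) t :=
    (Real.hasDerivAt_exp t).mul (hasDerivAt_id t)
  have h2 := (h1.sub (Real.hasDerivAt_exp t)).add_const 1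
  have : Real.exp t * t + Real.exp t * 1 - Real.exp t = DF t := by unfold DF; ring
  rw [this] at h2
  exact h2

lemma hasDerivAt_DF (t : ℝ) : HasDerivAt DF (Real.exp t * (t + 1)) t := by
  have h1 : HasDerivAt (fun t : ℝ => Real.exp t * t) (Real.exp t * t + Real.exp t * 1) t :=
    (Real.hasDerivAt_exp t).mul (hasDerivAt_id t)
  have : Real.exp t * t + Real.exp t * 1 = Real.exp t * (t + 1) := by ring
  rw [this] at h1
  exact h1

lemma DF_strictMonoOn : StrictMonoOn DF (Set.Ici (-1 : ℝ)) := by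
  apply strictMonoOn_of_deriv_pos (convex_Ici _)
  · exact fun x _ => (hasDerivAt_DF x).continuousAt.continuousWithinAt
  · intro x hx
    rw [interior_Ici] at hx
    rw [(hasDerivAt_DF x).deriv]
    have : (0:ℝ) < x + 1 := by simpa using neg_lt_iff_pos_add.mp hx
    positivity

lemma DF_strictAntiOn : StrictAntiOn DF (Set.Iic (-1 : ℝ)) := by
  apply strictAntiOn_of_deriv_neg (convex_Iic _)
  · exact fun x _ => (hasDerivAt_DF x).continuousAt.continuousWithinAt
  · intro x hx
    rw [interior_Iic] at hx
    rw [(hasDerivAt_DF x).deriv]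
    have hx1 : x + 1 < 0 := by linarith [hx.out]
    exact mul_neg_of_pos_of_neg (Real.exp_pos x) hx1

lemma phiF_mvt {a b : ℝ} (hab : a < b) :
    ∃ ξ ∈ Set.Ioo a b, phiF b - phiF a = DF ξ * (b - a) := by
  obtain ⟨ξ, hξ, h⟩ := exists_hasDerivAt_eq_slope phiF DF hab
    (fun x _ => (hasDerivAt_phiF x).continuousAt.continuousWithinAt)
    (fun x _ => hasDerivAt_phiF x)
  refine ⟨ξ, hξ, ?_⟩
  rw [h, div_mul_eq_mul_div, mul_div_assoc, div_self (sub_ne_zero.2 hab.ne'), mul_one]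

lemma tangent_lt {s t : ℝ} (hs : s ∈ Set.Icc (-1 : ℝ) 0) (ht : t ∈ Set.Icc (-1 : ℝ) 0)
    (hne : t ≠ s) : phiF s + DF s * (t - s) < phiF t := by
  rcases lt_or_gt_of_ne hne with h | h
  · obtain ⟨ξ, hξ, heq⟩ := phiF_mvt h
    have hD : DF ξ < DF s := DF_strictMonoOn (Set.mem_Ici.2 (ht.1.trans hξ.1.le))
      (Set.mem_Ici.2 hs.1) hξ.2
    nlinarith [heq, hD, sub_pos.2 h]
  · obtain ⟨ξ, hξ, heq⟩ := phiF_mvt h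
    have hD : DF s < DF ξ := DF_strictMonoOn (Set.mem_Ici.2 hs.1)
      (Set.mem_Ici.2 (hs.1.trans hξ.1.le)) hξ.1
    nlinarith [heq, hD, sub_pos.2 h]

lemma tangent_le {s t : ℝ} (hs : s ∈ Set.Icc (-1 : ℝ) 0) (ht : t ∈ Set.Icc (-1 : ℝ) 0) :
    phiF s + DF s * (t - s) ≤ phiF t := by
  rcases eq_or_ne t s with rfl | hne
  · simp
  · exact (tangent_lt hs ht hne).le

lemma tangent_comp {v₁ v₂ t : ℝ} (h1 : v₁ ∈ Set.Icc (-1 : ℝ) 0) (h2 : v₂ ∈ Set.Icc (-1 : ℝ) 0)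
    (h12 : v₁ ≤ v₂) (ht : t ≤ v₁) :
    phiF v₂ + DF v₂ * (t - v₂) ≤ phiF v₁ + DF v₁ * (t - v₁) := by
  rcases eq_or_lt_of_le h12 with rfl | hlt
  · exact le_refl _
  · have ht1 : phiF v₂ + DF v₂ * (v₁ - v₂) ≤ phiF v₁ := tangent_le h2 h1
    have hD : DF v₁ ≤ DF v₂ :=
      (DF_strictMonoOn (Set.mem_Ici.2 h1.1) (Set.mem_Ici.2 h2.1) hlt).le
    have hmul : DF v₂ * (t - v₁) ≤ DF v₁ * (t - v₁) :=
      mul_le_mul_of_nonpos_right hD (sub_nonpos.2 ht)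
    nlinarith [ht1, hmul]

/-- core concavity contradiction : on `[p,q]` with antitone derivative,
nonneg at both endpoints forces nonneg inside (strict at `q` gives strict inside). -/
lemma concave_core (g g' : ℝ → ℝ) (hd : ∀ x, HasDerivAt g (g' x) x)
    {p q t : ℝ} (hpt : p < t) (htq : t < q)
    (hant : ∀ a b, p ≤ a → a ≤ b → b ≤ q → g' b ≤ g' a)
    (hp : 0 ≤ g p) (hq : 0 ≤ g q) (hcase : 0 < g q ∨ g t < 0) (hle : g t ≤ 0) : False := by
  obtain ⟨ξ₁, hξ₁, e1⟩ := exists_hasDerivAt_eq_slope g g' hpt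
    (fun x _ => (hd x).continuousAt.continuousWithinAt) (fun x _ => hd x)
  obtain ⟨ξ₂, hξ₂, e2⟩ := exists_hasDerivAt_eq_slope g g' htq
    (fun x _ => (hd x).continuousAt.continuousWithinAt) (fun x _ => hd x)
  have h1 : g' ξ₁ ≤ 0 := by
    rw [e1]
    apply div_nonpos_of_nonpos_of_nonneg <;> linarith
  have h2 : 0 ≤ g' ξ₂ := by
    rw [e2]
    apply div_nonneg <;> linarith
  have hanti := hant ξ₁ ξ₂ hξ₁.1.le (hξ₁.2.trans hξ₂.1).le hξ₂.2.le
  rcases hcase with hc | hc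
  · have : 0 < g' ξ₂ := by
      rw [e2]; apply div_pos <;> linarith
    linarith
  · have : g' ξ₁ < 0 := by
      rw [e1]; apply div_neg_of_neg_of_pos <;> linarith
    linarith

lemma concave_nonneg (g g' : ℝ → ℝ) (hd : ∀ x, HasDerivAt g (g' x) x)
    {p q t : ℝ} (hpq : p < q) (ht : t ∈ Set.Icc p q)
    (hant : ∀ a b, p ≤ a → a ≤ b → b ≤ q → g' b ≤ g' a)
    (hp : 0 ≤ g p) (hq : 0 ≤ g q) : 0 ≤ g t := by
  rcases eq_or_lt_of_le ht.1 with rfl | hpt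
  · exact hp
  rcases eq_or_lt_of_le ht.2 with rfl | htq
  · exact hq
  by_contra hneg
  push_neg at hneg
  exact concave_core g g' hd hpt htq hant hp hq (Or.inr hneg) hneg.le

lemma concave_pos (g g' : ℝ → ℝ) (hd : ∀ x, HasDerivAt g (g' x) x)
    {p q t : ℝ} (hpt : p < t) (htq : t ≤ q)
    (hant : ∀ a b, p ≤ a → a ≤ b → b ≤ q → g' b ≤ g' a)
    (hp : 0 ≤ g p) (hq : 0 < g q) : 0 < g t := by
  rcases eq_or_lt_of_le htq with rfl | htq'
  · exact hq
  by_contra hneg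
  push_neg at hneg
  exact concave_core g g' hd hpt htq' hant hp hq.le (Or.inl hq) hneg

/-! ### the functions of η -/

def uF (η : ℝ) : ℝ := Real.log η / η
def vF (E η : ℝ) : ℝ := Real.log η / E
def FF (E η : ℝ) : ℝ := phiF (uF η) - phiF (vF E η) - DF (vF E η) * (uF η - vF E η)

lemma hasDerivAt_psi (s t : ℝ) :
    HasDerivAt (fun t => phiF t - (phiF s + DF s * (t - s))) (DF t - DF s) t := by
  have h := (((hasDerivAt_id t).sub_const s).const_mul (DF s)).const_add (phiF s)
  have h2 := (hasDerivAt_phiF t).sub h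
  rw [mul_one] at h2
  exact h2

lemma uv_lt {E η : ℝ} (hE : 1 ≤ E) (h0 : 0 < η) (h1 : η < 1) : uF η < vF E η := by
  have hc : Real.log η < 0 := Real.log_neg h0 h1
  have hηE : η < E := h1.trans_le hE
  have h1E : (1:ℝ)/E < 1/η := one_div_lt_one_div_of_lt h0 hηE
  have h2 := mul_lt_mul_of_neg_left h1E hc
  rw [mul_one_div, mul_one_div] at h2
  exact h2

lemma vF_neg {E η : ℝ} (hE : 1 ≤ E) (h0 : 0 < η) (h1 : η < 1) : vF E η < 0 :=
  div_neg_of_neg_of_pos (Real.log_neg h0 h1) (lt_of_lt_of_le one_pos hE)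

lemma uF_lt {η₁ η₂ : ℝ} (h0 : 0 < η₁) (h12 : η₁ < η₂) (h1 : η₂ < 1) : uF η₁ < uF η₂ := by
  have hc1 : Real.log η₁ < Real.log η₂ := Real.log_lt_log h0 h12
  have hc2 : Real.log η₂ < 0 := Real.log_neg (h0.trans h12) h1
  have h02 : 0 < η₂ := h0.trans h12
  unfold uF
  rw [div_lt_div_iff₀ h0 h02]
  nlinarith

lemma vF_lt {E η₁ η₂ : ℝ} (hE : 1 ≤ E) (h0 : 0 < η₁) (h12 : η₁ < η₂) : vF E η₁ < vF E η₂ := by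
  have hc1 : Real.log η₁ < Real.log η₂ := Real.log_lt_log h0 h12
  unfold vF
  exact div_lt_div_of_pos_right hc1 (lt_of_lt_of_le one_pos hE)

/-- Sign lemma A: if `v ≤ -1` then `F < 0`. -/
lemma FF_neg {E η : ℝ} (hE : 1 ≤ E) (h0 : 0 < η) (h1 : η < 1) (hv : vF E η ≤ -1) :
    FF E η < 0 := by
  have huv := uv_lt hE h0 h1
  obtain ⟨ξ, hξ, heq⟩ := phiF_mvt huv
  have hD : DF (vF E η) < DF ξ := DF_strictAntiOn (Set.mem_Iic.2 (hξ.2.le.trans hv))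
    (Set.mem_Iic.2 hv) hξ.2
  unfold FF
  nlinarith [heq, hD, sub_pos.2 huv]

/-- Sign lemma B: if `-1 ≤ u` then `0 < F`. -/
lemma FF_pos {E η : ℝ} (hE : 1 ≤ E) (h0 : 0 < η) (h1 : η < 1) (hu : -1 ≤ uF η) :
    0 < FF E η := by
  have huv := uv_lt hE h0 h1
  obtain ⟨ξ, hξ, heq⟩ := phiF_mvt huv
  have hD : DF ξ < DF (vF E η) := DF_strictMonoOn (Set.mem_Ici.2 (hu.trans hξ.1.le))
    (Set.mem_Ici.2 (hu.trans huv.le)) hξ.2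
  unfold FF
  nlinarith [heq, hD, sub_pos.2 huv]

lemma zero_loc {E η : ℝ} (hE : 1 ≤ E) (h0 : 0 < η) (h1 : η < 1) (hz : FF E η = 0) :
    uF η < -1 ∧ -1 < vF E η ∧ vF E η < 0 := by
  refine ⟨?_, ?_, vF_neg hE h0 h1⟩
  · by_contra h
    push_neg at h
    exact absurd hz (FF_pos hE h0 h1 h).ne'
  · by_contra h
    push_neg at h
    exact absurd hz (FF_neg hE h0 h1 h).ne

/-- the key uniqueness step: a zero forces positivity at all larger η. -/
lemma FF_pos_of_gt {E η₁ η₂ : ℝ} (hE : 1 ≤ E) (h10 : 0 < η₁) (h12 : η₁ < η₂) (h21 : η₂ < 1)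
    (hz : FF E η₁ = 0) : 0 < FF E η₂ := by
  have h20 : 0 < η₂ := h10.trans h12
  have h11 : η₁ < 1 := h12.trans h21
  obtain ⟨hu1, hv1, hv1'⟩ := zero_loc hE h10 h11 hz
  set u₁ := uF η₁ with hu₁def
  set v₁ := vF E η₁ with hv₁def
  set u₂ := uF η₂ with hu₂def
  set v₂ := vF E η₂ with hv₂def
  have huu : u₁ < u₂ := uF_lt h10 h12 h21
  have hvv : v₁ < v₂ := vF_lt hE h10 h12
  have hv2' : v₂ < 0 := vF_neg hE h20 h21
  rcases le_or_gt (-1 : ℝ) u₂ with hu2 | hu2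
  · exact FF_pos hE h20 h21 hu2
  -- u₂ < -1 : use concavity of ψ = φ - tangent at v₁ on [u₁, -1]
  set g : ℝ → ℝ := fun t => phiF t - (phiF v₁ + DF v₁ * (t - v₁)) with hgdef
  have hgd : ∀ x, HasDerivAt g (DF x - DF v₁) x := fun x => hasDerivAt_psi v₁ x
  have hgu₁ : g u₁ = 0 := by
    have : FF E η₁ = g u₁ := by unfold FF; simp [hgdef]; ring
    rw [← this, hz]
  have hgm1 : 0 < g (-1) := by
    have := tangent_lt (s := v₁) (t := -1) ⟨hv1.le, hv1'.le⟩
      ⟨le_refl _, by norm_num⟩ (by intro h; rw [h] at hv1; exact lt_irrefl _ hv1)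
    simp only [hgdef]
    linarith
  have hant : ∀ a b, u₁ ≤ a → a ≤ b → b ≤ (-1:ℝ) → DF b - DF v₁ ≤ DF a - DF v₁ := by
    intro a b ha hab hb
    rcases eq_or_lt_of_le hab with rfl | hab'
    · exact le_refl _
    · have := DF_strictAntiOn (Set.mem_Iic.2 (hab.trans hb)) (Set.mem_Iic.2 hb) hab'
      linarith
  have hgu₂ : 0 < g u₂ :=
    concave_pos g _ hgd huu hu2.le hant (le_of_eq hgu₁.symm) hgm1
  have hcomp : phiF v₂ + DF v₂ * (u₂ - v₂) ≤ phiF v₁ + DF v₁ * (u₂ - v₁) :=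
    tangent_comp ⟨hv1.le, hv1'.le⟩ ⟨by linarith, hv2'.le⟩ hvv.le (by linarith)
  have : FF E η₂ = phiF u₂ - (phiF v₂ + DF v₂ * (u₂ - v₂)) := by unfold FF; ring
  rw [this]
  have : g u₂ = phiF u₂ - (phiF v₁ + DF v₁ * (u₂ - v₁)) := by simp [hgdef]
  linarith

/-- the tangent-line inequality in the φ picture. -/
lemma tangent_main {E η : ℝ} (hE : 1 ≤ E) (h0 : 0 < η) (h1 : η < 1) (hz : FF E η = 0)
    {s t : ℝ} (hs : vF E η ≤ s) (hs0 : s ≤ 0) (ht : uF η ≤ t) (ht0 : t ≤ 0) :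
    phiF s + DF s * (t - s) ≤ phiF t := by
  obtain ⟨hu, hv, hv'⟩ := zero_loc hE h0 h1 hz
  set u := uF η
  set v := vF E η
  have hsIcc : s ∈ Set.Icc (-1:ℝ) 0 := ⟨hv.le.trans hs, hs0⟩
  rcases le_or_gt (-1:ℝ) t with htm | htm
  · exact tangent_le hsIcc ⟨htm, ht0⟩
  -- t < -1
  set g : ℝ → ℝ := fun t => phiF t - (phiF s + DF s * (t - s)) with hgdef
  have hgd : ∀ x, HasDerivAt g (DF x - DF s) x := fun x => hasDerivAt_psi s x
  have hgu : 0 ≤ g u := by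
    have hcomp : phiF s + DF s * (u - s) ≤ phiF v + DF v * (u - v) :=
      tangent_comp ⟨hv.le, hv'.le⟩ hsIcc hs (by linarith)
    have hFF : phiF u - (phiF v + DF v * (u - v)) = 0 := by
      have : FF E η = phiF u - (phiF v + DF v * (u - v)) := by unfold FF; ring
      rw [← this, hz]
    simp only [hgdef]
    linarith
  have hgm1 : 0 ≤ g (-1) := by
    have := tangent_le (s := s) (t := -1) hsIcc ⟨le_refl _, by norm_num⟩
    simp only [hgdef]
    linarith
  have hant : ∀ a b, u ≤ a → a ≤ b → b ≤ (-1:ℝ) → DF b - DF s ≤ DF a - DF s := by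
    intro a b ha hab hb
    rcases eq_or_lt_of_le hab with rfl | hab'
    · exact le_refl _
    · have := DF_strictAntiOn (Set.mem_Iic.2 (hab.trans hb)) (Set.mem_Iic.2 hb) hab'
      linarith
  have := concave_nonneg g _ hgd (by linarith : u < -1) ⟨ht, htm.le⟩ hant hgu hgm1
  simp only [hgdef] at this
  linarith

/-- existence of a root of FF in (0,1). -/
lemma exists_root {E : ℝ} (hE : 1 ≤ E) : ∃ η, 0 < η ∧ η < 1 ∧ FF E η = 0 := by
  set η₀ := Real.exp (-E) with hη₀
  set η₁ := Real.exp (-2⁻¹ : ℝ) with hη₁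
  have hη₀pos : 0 < η₀ := Real.exp_pos _
  have hη₁pos : 0 < η₁ := Real.exp_pos _
  have hη₀lt : η₀ < η₁ := Real.exp_lt_exp.2 (by linarith)
  have hη₁lt1 : η₁ < 1 := by
    rw [hη₁, Real.exp_lt_one_iff]; norm_num
  have hη₀lt1 : η₀ < 1 := hη₀lt.trans hη₁lt1
  -- FF at η₀ is negative
  have hF0 : FF E η₀ < 0 := by
    apply FF_neg hE hη₀pos hη₀lt1
    unfold vF
    rw [hη₀, Real.log_exp]
    rw [div_le_iff₀ (by linarith : (0:ℝ) < E)]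
    linarith
  -- FF at η₁ is positive
  have hF1 : 0 < FF E η₁ := by
    apply FF_pos hE hη₁pos hη₁lt1
    unfold uF
    rw [hη₁, Real.log_exp]
    have hsq : Real.exp (2⁻¹:ℝ) * Real.exp (2⁻¹:ℝ) = Real.exp 1 := by
      rw [← Real.exp_add]; norm_num
    have he2 : Real.exp (2⁻¹:ℝ) ≤ 2 := by
      nlinarith [Real.exp_one_lt_d9, Real.exp_pos (2⁻¹:ℝ)]
    rw [Real.exp_neg, div_eq_mul_inv, inv_inv]
    nlinarith [Real.exp_pos (2⁻¹:ℝ)]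
  -- continuity of FF on [η₀, η₁]
  have hcont : ContinuousOn (FF E) (Set.Icc η₀ η₁) := by
    have hphi : Continuous phiF := by
      unfold phiF
      continuity
    have hDF : Continuous DF := by
      unfold DF
      continuity
    have hlog : ContinuousOn Real.log (Set.Icc η₀ η₁) := by
      apply Real.continuousOn_log.mono
      intro x hx
      simp only [Set.mem_compl_iff, Set.mem_singleton_iff]
      exact (hη₀pos.trans_le hx.1).ne'
    have hu : ContinuousOn uF (Set.Icc η₀ η₁) := by
      unfold uF
      exact hlog.div (continuous_id.continuousOn) (fun x hx => (hη₀pos.trans_le hx.1).ne')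
    have hv : ContinuousOn (vF E) (Set.Icc η₀ η₁) := by
      unfold vF
      exact hlog.div_const E
    unfold FF
    exact ((hphi.comp_continuousOn hu).sub (hphi.comp_continuousOn hv)).sub
      ((hDF.comp_continuousOn hv).mul (hu.sub hv))
  have h0mem : (0:ℝ) ∈ Set.Icc (FF E η₀) (FF E η₁) := ⟨hF0.le, hF1.le⟩
  obtain ⟨η, hηmem, hηz⟩ := intermediate_value_Icc hη₀lt.le hcont h0mem
  refine ⟨η, hη₀pos.trans_le hηmem.1, lt_of_le_of_lt hηmem.2 hη₁lt1, hηz⟩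


lemma etaEq_iff_FF {E η : ℝ} (h0 : 0 < η) : etaEq E η ↔ FF E η = 0 := by
  have hu : η ^ (1/η : ℝ) = Real.exp (uF η) := by
    rw [Real.rpow_def_of_pos h0]; unfold uF; rw [mul_one_div]
  have hv : η ^ (1/E : ℝ) = Real.exp (vF E η) := by
    rw [Real.rpow_def_of_pos h0]; unfold vF; rw [mul_one_div]
  unfold etaEq FF
  rw [hu, hv]
  unfold hfun phiF DF
  rw [Real.log_exp, Real.log_exp]
  constructor <;> intro h <;> linarith

/-- Zhao's Fact 5.5: existence and uniqueness of `η_*` and the tangent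
line inequality. -/
theorem statement8 (e : ℕ) (he : 1 ≤ e) :
    ∃ η : ℝ, η ∈ Set.Ioo (0:ℝ) 1 ∧ etaEq (e : ℝ) η ∧
      (∀ η' : ℝ, η' ∈ Set.Ioo (0:ℝ) 1 → etaEq (e : ℝ) η' → η' = η) ∧
      ∀ x r : ℝ, x ∈ Set.Icc (η ^ (1 / η)) 1 → r ∈ Set.Icc (η ^ (1 / (e : ℝ))) 1 →
        hfun r + r * Real.log r * (Real.log x - Real.log r) ≤ hfun x := by
  have hE : (1:ℝ) ≤ (e:ℝ) := by exact_mod_cast he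
  obtain ⟨η, h0, h1, hz⟩ := exists_root hE
  refine ⟨η, ⟨h0, h1⟩, (etaEq_iff_FF h0).2 hz, ?_, ?_⟩
  · intro η' hη' heq
    have hz' : FF (e:ℝ) η' = 0 := (etaEq_iff_FF hη'.1).1 heq
    rcases lt_trichotomy η' η with h | h | h
    · exact absurd hz (FF_pos_of_gt hE hη'.1 h h1 hz').ne'
    · exact h
    · exact absurd hz' (FF_pos_of_gt hE h0 h hη'.2 hz).ne'
  · intro x r hx hr
    have hxp : 0 < x := lt_of_lt_of_le (Real.rpow_pos_of_pos h0 _) hx.1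
    have hrp : 0 < r := lt_of_lt_of_le (Real.rpow_pos_of_pos h0 _) hr.1
    have ht : uF η ≤ Real.log x := by
      have h2 := Real.log_le_log (Real.rpow_pos_of_pos h0 _) hx.1
      rw [Real.log_rpow h0, one_div_mul_eq_div] at h2
      exact h2
    have hs : vF (e:ℝ) η ≤ Real.log r := by
      have h2 := Real.log_le_log (Real.rpow_pos_of_pos h0 _) hr.1
      rw [Real.log_rpow h0, one_div_mul_eq_div] at h2
      exact h2
    have ht0 : Real.log x ≤ 0 := Real.log_nonpos hxp.le hx.2
    have hs0 : Real.log r ≤ 0 := Real.log_nonpos hrp.le hr.2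
    have hhx : hfun x = phiF (Real.log x) := by
      unfold hfun phiF; rw [Real.exp_log hxp]
    have hhr : hfun r = phiF (Real.log r) := by
      unfold hfun phiF; rw [Real.exp_log hrp]
    have hDr : r * Real.log r = DF (Real.log r) := by
      unfold DF; rw [Real.exp_log hrp]
    rw [hhx, hhr, hDr]
    exact tangent_main hE h0 h1 hz hs hs0 ht ht0


end LowerTails
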